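/- Let (V, s, t, c) be a flow network, let f be a maximum flow, and let D ⊆ V with s, t ∉ D be an in-tree rooted at a vertex v ∈ D: there is a function par : D → V such that for every w ∈ D, c (par w) w > 0 and c u w = 0 for every u ≠ par w (each w ∈ D has a unique incoming positive-capacity edge, from par w); par w ∈ D for every w ∈ D \ {v}, while par v ∉ D; and for every w ∈ D, iterating par starting from w reaches v after finitely many steps. If v ∈ T_f ∪ U_f, then D ⊆ T_f ∪ U_f; moreover, if additionally par v ∈ S_f, then every maximum flow g in the network satisfies g (par v) v = c (par v) v (the edge from par v into v is saturated by every maximum flow). -/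

import Mathlib

open scoped Classical

/-- A flow network: a finite vertex type with a source `s`, a sink `t` and a
capacity function `c` with no self-loops, no edges into `s` and no edges out of `t`. -/
structure FlowNet (V : Type) [Fintype V] where
  s : V
  t : V
  hst : s ≠ t
  c : V → V → ℕ
  c_self : ∀ v, c v v = 0
  c_to_s : ∀ v, c v s = 0
  c_from_t : ∀ v, c t v = 0

namespace FlowNet

variable {V : Type} [Fintype V]

/-- `f` is a flow: capacity-respecting and conserving flow at all internal vertices. -/
def IsFlow (N : FlowNet V) (f : V → V → ℕ) : Prop :=
  (∀ u v, f u v ≤ N.c u v) ∧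
  ∀ v, v ≠ N.s → v ≠ N.t → (∑ u, f u v) = ∑ u, f v u

/-- The value of a flow: total flow out of the source. -/
def value (N : FlowNet V) (f : V → V → ℕ) : ℕ := ∑ v, f N.s v

/-- `f` is a maximum flow. -/
def IsMaxFlow (N : FlowNet V) (f : V → V → ℕ) : Prop :=
  N.IsFlow f ∧ ∀ f', N.IsFlow f' → N.value f' ≤ N.value f

/-- Edge of the residual graph of `f`. -/
def ResEdge (N : FlowNet V) (f : V → V → ℕ) (u v : V) : Prop :=
  f u v < N.c u v ∨ 0 < f v u

/-- `S_f`: vertices reachable from `s` in the residual graph of `f`. -/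
def Sset (N : FlowNet V) (f : V → V → ℕ) : Set V :=
  {v | Relation.ReflTransGen (N.ResEdge f) N.s v}

/-- `T_f`: vertices from which `t` is reachable in the residual graph of `f`. -/
def Tset (N : FlowNet V) (f : V → V → ℕ) : Set V :=
  {v | Relation.ReflTransGen (N.ResEdge f) v N.t}

/-- `U_f`: all remaining vertices. -/
def Uset (N : FlowNet V) (f : V → V → ℕ) : Set V :=
  (N.Sset f ∪ N.Tset f)ᶜ

/-- An s-t cut: a set of vertices containing `s` but not `t`. -/
def IsCut (N : FlowNet V) (X : Set V) : Prop :=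
  N.s ∈ X ∧ N.t ∉ X

/-- The capacity of a cut. -/
noncomputable def cap (N : FlowNet V) (X : Set V) : ℕ :=
  ∑ u, ∑ v, if u ∈ X ∧ v ∉ X then N.c u v else 0

/-- A minimum s-t cut. -/
def IsMinCut (N : FlowNet V) (X : Set V) : Prop :=
  N.IsCut X ∧ ∀ Y, N.IsCut Y → N.cap X ≤ N.cap Y

end FlowNet

namespace Stmt5Aux

open Finset

variable {V : Type} [Fintype V]


variable {V : Type} [Fintype V]

noncomputable def colS (h : V → V → ℕ) (x : V) : ℕ := ∑ u, h u x
noncomputable def rowS (h : V → V → ℕ) (x : V) : ℕ := ∑ u, h x u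

noncomputable def bump (h : V → V → ℕ) (a b : V) : V → V → ℕ :=
  fun u w => h u w + if u = a ∧ w = b then 1 else 0

noncomputable def dropf (h : V → V → ℕ) (a b : V) : V → V → ℕ :=
  fun u w => h u w - if u = a ∧ w = b then 1 else 0

lemma sum_ite_pair (a x b : V) :
    (∑ u, (if u = a ∧ x = b then (1:ℕ) else 0)) = if x = b then 1 else 0 := by
  by_cases hx : x = b
  · simp [hx]
  · simp [hx]

lemma colS_bump (h : V → V → ℕ) (a b x : V) :
    colS (bump h a b) x = colS h x + if x = b then 1 else 0 := by
  simp only [colS, bump, Finset.sum_add_distrib, sum_ite_pair]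

lemma rowS_bump (h : V → V → ℕ) (a b x : V) :
    rowS (bump h a b) x = rowS h x + if x = a then 1 else 0 := by
  simp only [rowS, bump, Finset.sum_add_distrib]
  congr 1
  by_cases hx : x = a
  · simp [hx]
  · simp [hx]

lemma colS_dropf (h : V → V → ℕ) (a b x : V) (hle : 1 ≤ h a b) :
    colS (dropf h a b) x + (if x = b then 1 else 0) = colS h x := by
  have : ∀ u, dropf h a b u x + (if u = a ∧ x = b then 1 else 0) = h u x := by
    intro u
    simp only [dropf]
    split_ifs with hc
    · obtain ⟨h1, h2⟩ := hc; subst h1; subst h2; omega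
    · omega
  calc colS (dropf h a b) x + (if x = b then 1 else 0)
      = ∑ u, (dropf h a b u x + (if u = a ∧ x = b then 1 else 0)) := by
        simp only [Finset.sum_add_distrib, sum_ite_pair, colS]
    _ = colS h x := by simp only [this, colS]

lemma rowS_dropf (h : V → V → ℕ) (a b x : V) (hle : 1 ≤ h a b) :
    rowS (dropf h a b) x + (if x = a then 1 else 0) = rowS h x := by
  have : ∀ w, dropf h a b x w + (if x = a ∧ w = b then 1 else 0) = h x w := by
    intro w
    simp only [dropf]
    split_ifs with hc
    · obtain ⟨h1, h2⟩ := hc; subst h1; subst h2; omega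
    · omega
  have hsum : (∑ w, (if x = a ∧ w = b then (1:ℕ) else 0)) = if x = a then 1 else 0 := by
    by_cases hx : x = a <;> simp [hx]
  calc rowS (dropf h a b) x + (if x = a then 1 else 0)
      = ∑ w, (dropf h a b x w + (if x = a ∧ w = b then 1 else 0)) := by
        simp only [Finset.sum_add_distrib, hsum, rowS]
    _ = rowS h x := by simp only [this, rowS]

omit [Fintype V] in
lemma bump_le (h : V → V → ℕ) (c : V → V → ℕ) (a b : V) (hlt : h a b < c a b)
    (hle : ∀ u w, h u w ≤ c u w) : ∀ u w, bump h a b u w ≤ c u w := by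
  intro u w
  simp only [bump]
  split_ifs with hc
  · obtain ⟨h1, h2⟩ := hc; subst h1; subst h2; omega
  · simpa using hle u w

omit [Fintype V] in
lemma dropf_le (h : V → V → ℕ) (c : V → V → ℕ) (a b : V)
    (hle : ∀ u w, h u w ≤ c u w) : ∀ u w, dropf h a b u w ≤ c u w := by
  intro u w
  exact le_trans (Nat.sub_le _ _) (hle u w)

noncomputable def Dex (h : V → V → ℕ) (x : V) : ℤ := (colS h x : ℤ) - rowS h x

lemma Dex_bump (h : V → V → ℕ) (a b x : V) :
    Dex (bump h a b) x
      = Dex h x + (if x = b then 1 else 0) - (if x = a then 1 else 0) := by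
  simp only [Dex, colS_bump, rowS_bump]
  push_cast
  ring

lemma Dex_dropf (h : V → V → ℕ) (a b x : V) (hle : 1 ≤ h a b) :
    Dex (dropf h a b) x
      = Dex h x - (if x = b then 1 else 0) + (if x = a then 1 else 0) := by
  have h1 := colS_dropf h a b x hle
  have h2 := rowS_dropf h a b x hle
  have h1' : (colS (dropf h a b) x : ℤ) + (if x = b then 1 else 0) = colS h x := by
    exact_mod_cast congrArg (Nat.cast : ℕ → ℤ) h1
  have h2' : (rowS (dropf h a b) x : ℤ) + (if x = a then 1 else 0) = rowS h x := by
    exact_mod_cast congrArg (Nat.cast : ℕ → ℤ) h2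
  simp only [Dex]
  linarith

lemma exists_nodup_chain {α : Type*} (r : α → α → Prop) :
    ∀ (n : ℕ) (l : List α) (a b : α), l.length ≤ n → List.Chain r a l →
      (a :: l).getLast (List.cons_ne_nil _ _) = b →
      ∃ m : List α, List.Chain r a m ∧ (a :: m).getLast (List.cons_ne_nil _ _) = b ∧
        (a :: m).Nodup ∧ ∀ x ∈ m, x ∈ l := by
  intro n
  induction n with
  | zero =>
    intro l a b hlen hch hlast
    have hl : l = [] := List.length_eq_zero_iff.mp (Nat.le_zero.mp hlen)
    subst hl
    exact ⟨[], List.Chain.nil, hlast, by simp, by simp⟩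
  | succ n ih =>
    intro l a b hlen hch hlast
    by_cases hmem : a ∈ l
    · obtain ⟨l1, l2, rfl⟩ := List.append_of_mem hmem
      have hsuf : (a :: l2) <:+ (a :: (l1 ++ a :: l2)) := by
        refine ⟨a :: l1, by simp⟩
      have hchBig : List.Chain' r (a :: (l1 ++ a :: l2)) := hch
      have hch2 : List.Chain r a l2 := hchBig.suffix hsuf
      have hlast2 : (a :: l2).getLast (List.cons_ne_nil _ _) = b := by
        rw [← hlast]
        exact (List.getLast_append_of_ne_nil (l := a :: l1) (List.cons_ne_nil _ _) (List.cons_ne_nil _ _)).symm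
      have hlen2 : l2.length ≤ n := by
        simp only [List.length_append, List.length_cons] at hlen; omega
      obtain ⟨m, h1, h2, h3, h4⟩ := ih l2 a b hlen2 hch2 hlast2
      exact ⟨m, h1, h2, h3, fun x hx => by simp [List.mem_append]; tauto⟩
    · match l, hch with
      | [], _ => exact ⟨[], List.Chain.nil, hlast, by simp, by simp⟩
      | c :: l', hch =>
        obtain ⟨hac, hch'⟩ := List.chain_cons.mp hch
        have hlast' : (c :: l').getLast (List.cons_ne_nil _ _) = b := by
          rw [← hlast, List.getLast_cons (List.cons_ne_nil _ _)]
        have hlen' : l'.length ≤ n := by simp at hlen; omega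
        obtain ⟨m, h1, h2, h3, h4⟩ := ih l' c b hlen' hch' hlast'
        refine ⟨c :: m, List.chain_cons.mpr ⟨hac, h1⟩, ?_, ?_, ?_⟩
        · rw [List.getLast_cons (List.cons_ne_nil _ _)]; exact h2
        · refine List.nodup_cons.mpr ⟨?_, h3⟩
          intro hx
          rcases List.mem_cons.mp hx with h | h
          · exact hmem (h ▸ List.mem_cons_self)
          · exact hmem (List.mem_cons_of_mem _ (h4 _ h))
        · intro x hx
          rcases List.mem_cons.mp hx with h | h
          · simp [h]
          · exact List.mem_cons_of_mem _ (h4 _ h)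

lemma aug (N : FlowNet V) (f : V → V → ℕ) (hle : ∀ u w, f u w ≤ N.c u w) :
    ∀ (l : List V) (a : V), l ≠ [] → List.Chain (N.ResEdge f) a l → (a :: l).Nodup →
    ∃ g : V → V → ℕ,
      (∀ u w, g u w ≤ N.c u w) ∧
      (∀ u w, u ∉ a :: l → g u w = f u w) ∧
      (∀ u w, w ∉ a :: l → g u w = f u w) ∧
      (∀ x, x ≠ a → x ≠ (a :: l).getLast (List.cons_ne_nil _ _) → Dex g x = Dex f x) ∧
      (Dex g a = Dex f a - 1) ∧
      (Dex g ((a :: l).getLast (List.cons_ne_nil _ _))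
        = Dex f ((a :: l).getLast (List.cons_ne_nil _ _)) + 1) := by
  intro l
  induction l with
  | nil => intro a h; exact absurd rfl h
  | cons b t ih =>
    intro a _ hch hnd
    obtain ⟨hab, hch'⟩ := List.chain_cons.mp hch
    have hanin : a ∉ b :: t := (List.nodup_cons.mp hnd).1
    have hnd' : (b :: t).Nodup := (List.nodup_cons.mp hnd).2
    have hanb : a ≠ b := fun h => hanin (h ▸ List.mem_cons_self)
    rcases t with _ | ⟨c, t'⟩
    · -- base case: single edge a → b
      have hlast : (a :: [b]).getLast (List.cons_ne_nil _ _) = b := by simp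
      rw [hlast]
      by_cases hfw : f a b < N.c a b
      · refine ⟨bump f a b, bump_le f N.c a b hfw hle, ?_, ?_, ?_, ?_, ?_⟩
        · intro u w hu
          have : u ≠ a := fun h => hu (h ▸ List.mem_cons_self)
          simp [bump, this]
        · intro u w hw
          have : w ≠ b := fun h => hw (h ▸ by simp)
          simp [bump, this]
        · intro x hxa hxb
          rw [Dex_bump]
          simp [hxa, hxb]
        · rw [Dex_bump]; simp [hanb]
        · rw [Dex_bump]; simp [Ne.symm hanb]
      · have hbk : 0 < f b a := hab.resolve_left hfw
        refine ⟨dropf f b a, dropf_le f N.c b a hle, ?_, ?_, ?_, ?_, ?_⟩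
        · intro u w hu
          have : u ≠ b := fun h => hu (h ▸ by simp)
          simp [dropf, this]
        · intro u w hw
          have : w ≠ a := fun h => hw (h ▸ List.mem_cons_self)
          simp [dropf, this]
        · intro x hxa hxb
          rw [Dex_dropf f b a x hbk]
          simp [hxa, hxb]
        · rw [Dex_dropf f b a a hbk]; simp [hanb]
        · rw [Dex_dropf f b a b hbk]; simp [Ne.symm hanb]
    · -- step case
      set t : List V := c :: t' with ht
      have htne : t ≠ [] := by simp [ht]
      obtain ⟨g, hgcap, hgu, hgw, hgD, hgDb, hgDl⟩ := ih b htne hch' hnd'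
      have hlast1 : (a :: b :: t).getLast (List.cons_ne_nil _ _)
          = (b :: t).getLast (List.cons_ne_nil _ _) :=
        List.getLast_cons (List.cons_ne_nil _ _)
      set L := (b :: t).getLast (List.cons_ne_nil _ _) with hL
      have hLmem : L ∈ b :: t := List.getLast_mem _
      have hLt : L ∈ t := by
        have : L = t.getLast htne := List.getLast_cons htne
        rw [this]; exact List.getLast_mem _
      have hLnb : L ≠ b := fun h => (List.nodup_cons.mp hnd').1 (h ▸ hLt)
      have hLna : L ≠ a := fun h => hanin (h ▸ hLmem)
      have hbnL : b ≠ L := Ne.symm hLnb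
      rw [hlast1]
      by_cases hfw : f a b < N.c a b
      · have hgab : g a b = f a b := hgu a b hanin
        refine ⟨bump g a b, bump_le g N.c a b (hgab ▸ hfw) hgcap, ?_, ?_, ?_, ?_, ?_⟩
        · intro u w hu
          have hu1 : u ≠ a := fun h => hu (h ▸ List.mem_cons_self)
          have hu2 : u ∉ b :: t := fun h => hu (List.mem_cons_of_mem _ h)
          simp [bump, hu1, hgu u w hu2]
        · intro u w hw
          have hw1 : w ≠ b := fun h => hw (h ▸ by simp)
          have hw2 : w ∉ b :: t := fun h => hw (List.mem_cons_of_mem _ h)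
          simp [bump, hw1, hgw u w hw2]
        · intro x hxa hxL
          rw [Dex_bump]
          by_cases hxb : x = b
          · subst hxb
            rw [hgDb]
            simp [hxa, Ne.symm hanb]
          · rw [hgD x hxb hxL]
            simp [hxa, hxb]
        · rw [Dex_bump, hgD a hanb hLna.symm]
          simp [hanb]
        · rw [Dex_bump, hgDl]
          simp [hLnb, hLna]
      · have hbk0 : 0 < f b a := hab.resolve_left hfw
        have hgba : g b a = f b a := hgw b a hanin
        have hbk : 1 ≤ g b a := by omega
        refine ⟨dropf g b a, dropf_le g N.c b a hgcap, ?_, ?_, ?_, ?_, ?_⟩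
        · intro u w hu
          have hu1 : u ≠ b := fun h => hu (h ▸ by simp)
          have hu2 : u ∉ b :: t := fun h => hu (List.mem_cons_of_mem _ h)
          simp [dropf, hu1, hgu u w hu2]
        · intro u w hw
          have hw1 : w ≠ a := fun h => hw (h ▸ List.mem_cons_self)
          have hw2 : w ∉ b :: t := fun h => hw (List.mem_cons_of_mem _ h)
          simp [dropf, hw1, hgw u w hw2]
        · intro x hxa hxL
          rw [Dex_dropf g b a x hbk]
          by_cases hxb : x = b
          · subst hxb
            rw [hgDb]
            simp [hxa]
          · rw [hgD x hxb hxL]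
            simp [hxa, hxb]
        · rw [Dex_dropf g b a a hbk, hgD a hanb hLna.symm]
          simp [hanb]
        · rw [Dex_dropf g b a L hbk, hgDl]
          simp [hLnb, hLna]

lemma colS_into_s (N : FlowNet V) (h : V → V → ℕ) (hcap : ∀ u w, h u w ≤ N.c u w) :
    colS h N.s = 0 :=
  Finset.sum_eq_zero fun u _ => Nat.le_zero.mp (N.c_to_s u ▸ hcap u N.s)

lemma no_aug (N : FlowNet V) (f : V → V → ℕ) (hf : N.IsMaxFlow f) : N.t ∉ N.Sset f := by
  intro hst'
  obtain ⟨l, hch, hlast⟩ := List.exists_isChain_cons_of_relationReflTransGen hst'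
  obtain ⟨m, hm1, hm2, hm3, -⟩ :=
    exists_nodup_chain (N.ResEdge f) l.length l N.s N.t le_rfl hch hlast
  have hmne : m ≠ [] := by
    intro h
    subst h
    simp at hm2
    exact N.hst hm2
  obtain ⟨g, hgcap, -, -, hgD, hgDs, hgDt⟩ := aug N f hf.1.1 m N.s hmne hm1 hm3
  rw [hm2] at hgD hgDt
  have hgflow : N.IsFlow g := by
    refine ⟨hgcap, fun x hxs hxt => ?_⟩
    have h1 : Dex g x = Dex f x := hgD x hxs hxt
    have h2 : (∑ u, f u x) = ∑ u, f x u := hf.1.2 x hxs hxt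
    have h3 : colS f x = rowS f x := h2
    simp only [Dex, h3] at h1
    have : (colS g x : ℤ) = rowS g x := by omega
    exact_mod_cast this
  have hv : N.value g = rowS g N.s := rfl
  have hv' : N.value f = rowS f N.s := rfl
  have h0g : colS g N.s = 0 := colS_into_s N g hgcap
  have h0f : colS f N.s = 0 := colS_into_s N f hf.1.1
  have := hf.2 g hgflow
  simp only [Dex, h0g, h0f] at hgDs
  rw [hv, hv'] at this
  omega

lemma cut_eq (N : FlowNet V) (h : V → V → ℕ) (hh : N.IsFlow h) (X : Set V)
    (hs : N.s ∈ X) (ht : N.t ∉ X) :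
    (∑ u, ∑ w, if u ∈ X ∧ w ∉ X then h u w else 0)
      = (∑ u, ∑ w, if u ∉ X ∧ w ∈ X then h u w else 0) + N.value h := by
  have key : ∑ u, (if u ∈ X then rowS h u else 0)
      = ∑ u, (if u ∈ X then colS h u else 0) + N.value h := by
    have congr1 : ∀ u : V, (if u ∈ X then rowS h u else 0)
        = (if u ∈ X then colS h u else 0) + (if u = N.s then N.value h else 0) := by
      intro u
      by_cases hus : u = N.s
      · subst hus
        have h1 : colS h N.s = 0 := colS_into_s N h hh.1
        have h2 : rowS h N.s = N.value h := rfl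
        simp [hs, h1, h2]
      · by_cases hux : u ∈ X
        · have hut : u ≠ N.t := fun he => ht (he ▸ hux)
          have := hh.2 u hus hut
          simp [hux, hus]
          exact ((this : colS h u = rowS h u)).symm
        · simp [hux, hus]
    calc ∑ u, (if u ∈ X then rowS h u else 0)
        = ∑ u, ((if u ∈ X then colS h u else 0) + (if u = N.s then N.value h else 0)) :=
          Finset.sum_congr rfl fun u _ => congr1 u
      _ = (∑ u, (if u ∈ X then colS h u else 0)) + ∑ u, (if u = N.s then N.value h else 0) :=
          Finset.sum_add_distrib
      _ = (∑ u, (if u ∈ X then colS h u else 0)) + N.value h := by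
          congr 1
          simp
  have row_split : ∑ u, (if u ∈ X then rowS h u else 0)
      = (∑ u, ∑ w, if u ∈ X ∧ w ∈ X then h u w else 0)
        + ∑ u, ∑ w, if u ∈ X ∧ w ∉ X then h u w else 0 := by
    rw [← Finset.sum_add_distrib]
    refine Finset.sum_congr rfl fun u _ => ?_
    rw [← Finset.sum_add_distrib]
    by_cases hux : u ∈ X
    · simp only [hux, if_true, true_and, rowS]
      refine Finset.sum_congr rfl fun w _ => ?_
      by_cases hwx : w ∈ X <;> simp [hwx]
    · simp [hux]
  have col_split : ∑ u, (if u ∈ X then colS h u else 0)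
      = (∑ u, ∑ w, if u ∈ X ∧ w ∈ X then h u w else 0)
        + ∑ u, ∑ w, if u ∉ X ∧ w ∈ X then h u w else 0 := by
    have step1 : ∑ u, (if u ∈ X then colS h u else 0)
        = ∑ w, ∑ u, if w ∈ X then h u w else 0 := by
      refine Finset.sum_congr rfl fun u _ => ?_
      by_cases hux : u ∈ X <;> simp [hux, colS]
    rw [step1, Finset.sum_comm]
    rw [← Finset.sum_add_distrib]
    refine Finset.sum_congr rfl fun u _ => ?_
    rw [← Finset.sum_add_distrib]
    refine Finset.sum_congr rfl fun w _ => ?_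
    by_cases hux : u ∈ X <;> by_cases hwx : w ∈ X <;> simp [hux, hwx]
  omega

lemma no_cross (N : FlowNet V) (f : V → V → ℕ) (hcap : ∀ u w, f u w ≤ N.c u w)
    (u w : V) (hu : u ∈ N.Sset f) (hw : w ∉ N.Sset f) :
    f u w = N.c u w ∧ f w u = 0 := by
  have hne : ¬ N.ResEdge f u w := fun hr => hw (Relation.ReflTransGen.tail hu hr)
  rw [FlowNet.ResEdge] at hne
  push_neg at hne
  exact ⟨le_antisymm (hcap u w) hne.1, Nat.le_zero.mp hne.2⟩

lemma saturate (N : FlowNet V) (f : V → V → ℕ) (hf : N.IsMaxFlow f)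
    (g : V → V → ℕ) (hg : N.IsMaxFlow g) (a b : V)
    (ha : a ∈ N.Sset f) (hb : b ∉ N.Sset f) : g a b = N.c a b := by
  set X := N.Sset f with hX
  have hsX : N.s ∈ X := Relation.ReflTransGen.refl
  have htX : N.t ∉ X := no_aug N f hf
  have hval : N.value g = N.value f := le_antisymm (hf.2 g hg.1) (hg.2 f hf.1)
  have hnc : ∀ u w, u ∈ X → w ∉ X → f u w = N.c u w ∧ f w u = 0 :=
    fun u w hu hw => no_cross N f hf.1.1 u w hu hw
  have hfOut : (∑ u, ∑ w, if u ∈ X ∧ w ∉ X then f u w else 0)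
      = ∑ u, ∑ w, if u ∈ X ∧ w ∉ X then N.c u w else 0 := by
    refine Finset.sum_congr rfl fun u _ => Finset.sum_congr rfl fun w _ => ?_
    by_cases hc : u ∈ X ∧ w ∉ X
    · simp [hc, (hnc u w hc.1 hc.2).1]
    · simp [hc]
  have hfIn : (∑ u, ∑ w, if u ∉ X ∧ w ∈ X then f u w else 0) = 0 := by
    refine Finset.sum_eq_zero fun u _ => Finset.sum_eq_zero fun w _ => ?_
    by_cases hc : u ∉ X ∧ w ∈ X
    · simp [hc, (hnc w u hc.2 hc.1).2]
    · simp [hc]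
  have cutf := cut_eq N f hf.1 X hsX htX
  have cutg := cut_eq N g hg.1 X hsX htX
  have hOutle : (∑ u, ∑ w, if u ∈ X ∧ w ∉ X then g u w else 0)
      ≤ ∑ u, ∑ w, if u ∈ X ∧ w ∉ X then N.c u w else 0 := by
    refine Finset.sum_le_sum fun u _ => Finset.sum_le_sum fun w _ => ?_
    split_ifs
    · exact hg.1.1 u w
    · exact le_rfl
  have hOutEq : (∑ u, ∑ w, if u ∈ X ∧ w ∉ X then g u w else 0)
      = ∑ u, ∑ w, if u ∈ X ∧ w ∉ X then N.c u w else 0 := by omega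
  have inner_le : ∀ u ∈ (Finset.univ : Finset V),
      (∑ w, if u ∈ X ∧ w ∉ X then g u w else 0)
        ≤ ∑ w, if u ∈ X ∧ w ∉ X then N.c u w else 0 := by
    intro u _
    refine Finset.sum_le_sum fun w _ => ?_
    split_ifs
    · exact hg.1.1 u w
    · exact le_rfl
  have h1 := (Finset.sum_eq_sum_iff_of_le inner_le).mp hOutEq a (Finset.mem_univ a)
  have inner_le2 : ∀ w ∈ (Finset.univ : Finset V),
      (if a ∈ X ∧ w ∉ X then g a w else 0) ≤ (if a ∈ X ∧ w ∉ X then N.c a w else 0) := by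
    intro w _
    split_ifs
    · exact hg.1.1 a w
    · exact le_rfl
  have h2 := (Finset.sum_eq_sum_iff_of_le inner_le2).mp h1 b (Finset.mem_univ b)
  simpa [ha, hb] using h2


theorem stmt5' {V : Type} [Fintype V] (N : FlowNet V) (f : V → V → ℕ)
    (hf : N.IsMaxFlow f)
    (D : Set V) (hsD : N.s ∉ D) (htD : N.t ∉ D)
    (v : V) (hvD : v ∈ D) (par : V → V)
    (hpar1 : ∀ w ∈ D, 0 < N.c (par w) w ∧ ∀ u, u ≠ par w → N.c u w = 0)
    (hpar2 : ∀ w ∈ D, w ≠ v → par w ∈ D)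
    (hpar3 : par v ∉ D)
    (hpar4 : ∀ w ∈ D, ∃ k : ℕ, par^[k] w = v)
    (hvTU : v ∈ N.Tset f ∪ N.Uset f) :
    D ⊆ N.Tset f ∪ N.Uset f ∧
      (par v ∈ N.Sset f →
        ∀ g, N.IsMaxFlow g → g (par v) v = N.c (par v) v) := by
  have hnoaug := no_aug N f hf
  -- v is not in S_f
  have hvnotS : v ∉ N.Sset f := by
    intro hvS
    rcases hvTU with hvT | hvU
    · exact hnoaug (Relation.ReflTransGen.trans hvS hvT)
    · exact hvU (Or.inl hvS)
  -- Lemma A : if w ∈ D is in S_f then par w ∈ S_f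
  have lemA : ∀ w ∈ D, w ∈ N.Sset f → par w ∈ N.Sset f := by
    intro w hwD hwS
    have hws : w ≠ N.s := fun h => hsD (h ▸ hwD)
    have hwt : w ≠ N.t := fun h => htD (h ▸ hwD)
    rcases Relation.ReflTransGen.cases_tail hwS with heq | ⟨u, huS, hres⟩
    · exact absurd heq hws
    · rcases hres with hfw | hbk
      · -- f u w < c u w, so c u w > 0, so u = par w
        have hu : u = par w := by
          by_contra hne
          rw [(hpar1 w hwD).2 u hne] at hfw
          omega
        exact hu ▸ huS
      · -- 0 < f w u ; conservation forces f (par w) w > 0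
        have hcons : (∑ x, f x w) = ∑ x, f w x := hf.1.2 w hws hwt
        have hcol : (∑ x, f x w) = f (par w) w := by
          refine Finset.sum_eq_single (par w) (fun x _ hx => ?_) (fun h => absurd (Finset.mem_univ _) h)
          exact Nat.le_zero.mp ((hpar1 w hwD).2 x hx ▸ hf.1.1 x w)
        have hrow : f w u ≤ ∑ x, f w x :=
          Finset.single_le_sum (fun x _ => Nat.zero_le _) (Finset.mem_univ u)
        have hpos : 0 < f (par w) w := by omega
        exact Relation.ReflTransGen.tail hwS (Or.inr hpos)
  -- no vertex of D lies in S_f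
  have hnoS : ∀ k : ℕ, ∀ w ∈ D, par^[k] w = v → w ∉ N.Sset f := by
    intro k
    induction k with
    | zero =>
      intro w _ hw
      simp only [Function.iterate_zero, id_eq] at hw
      exact hw ▸ hvnotS
    | succ k ih =>
      intro w hwD hit hwS
      by_cases hwv : w = v
      · exact hvnotS (hwv ▸ hwS)
      · have hpwD : par w ∈ D := hpar2 w hwD hwv
        have : par^[k] (par w) = v := by
          rw [← Function.iterate_succ_apply]; exact hit
        exact ih (par w) hpwD this (lemA w hwD hwS)
  constructor
  · intro w hwD
    obtain ⟨k, hk⟩ := hpar4 w hwD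
    have hwnotS := hnoS k w hwD hk
    by_cases hwT : w ∈ N.Tset f
    · exact Or.inl hwT
    · exact Or.inr (by simp [FlowNet.Uset]; exact ⟨hwnotS, hwT⟩)
  · intro hpvS g hg
    exact saturate N f hf g hg (par v) v hpvS hvnotS

end Stmt5Aux


/-- let `D` be an in-tree rooted at `v` (each `w ∈ D` has a unique incoming
positive-capacity edge, from `par w`). If `v ∈ T_f ∪ U_f` then `D ⊆ T_f ∪ U_f`; moreover
if additionally `par v ∈ S_f` then every maximum flow saturates the edge from `par v` to `v`. -/
theorem stmt5 {V : Type} [Fintype V] (N : FlowNet V) (f : V → V → ℕ)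
    (hf : N.IsMaxFlow f)
    (D : Set V) (hsD : N.s ∉ D) (htD : N.t ∉ D)
    (v : V) (hvD : v ∈ D) (par : V → V)
    (hpar1 : ∀ w ∈ D, 0 < N.c (par w) w ∧ ∀ u, u ≠ par w → N.c u w = 0)
    (hpar2 : ∀ w ∈ D, w ≠ v → par w ∈ D)
    (hpar3 : par v ∉ D)
    (hpar4 : ∀ w ∈ D, ∃ k : ℕ, par^[k] w = v)
    (hvTU : v ∈ N.Tset f ∪ N.Uset f) :
    D ⊆ N.Tset f ∪ N.Uset f ∧
      (par v ∈ N.Sset f →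
        ∀ g, N.IsMaxFlow g → g (par v) v = N.c (par v) v) := by
  exact Stmt5Aux.stmt5' N f hf D hsD htD v hvD par hpar1 hpar2 hpar3 hpar4 hvTU
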